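/- Let N ≥ 1, M, h be integers with h ≠ 0, and set r = Nh/2. Then for all generic β ∈ ℂ (all sines occurring in denominators nonzero): 𝒴_{N, Nh/2, M}(β) = 1. -/
import Mathlib


open Complex
open scoped Real

/-- The exchange function `F(M,β)` of Lemma 3.1 of the paper:
`F(M,β) = ∏_{k=0}^{M−1} sin²((iβ+kπr)/N) / (sin((iβ+kπr+π)/N)·sin((iβ+kπr−π)/N))` for `M > 0`,
`F(M,β) = ∏_{k=1}^{|M|} sin((−iβ+kπr+π)/N)·sin((−iβ+kπr−π)/N) / sin²((−iβ+kπr)/N)` for `M < 0`,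
and `F(0,β) = 1`. -/
noncomputable def Ffun (N : ℕ) (r : ℂ) (M : ℤ) (β : ℂ) : ℂ :=
  if 0 < M then
    ∏ k ∈ Finset.range M.toNat,
      (Complex.sin ((Complex.I * β + (k : ℂ) * (π : ℂ) * r) / (N : ℂ))) ^ 2 /
        (Complex.sin ((Complex.I * β + (k : ℂ) * (π : ℂ) * r + (π : ℂ)) / (N : ℂ)) *
         Complex.sin ((Complex.I * β + (k : ℂ) * (π : ℂ) * r - (π : ℂ)) / (N : ℂ)))
  else if M < 0 then
    ∏ k ∈ Finset.range M.natAbs,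
      Complex.sin ((-(Complex.I * β) + ((k : ℂ) + 1) * (π : ℂ) * r + (π : ℂ)) / (N : ℂ)) *
        Complex.sin ((-(Complex.I * β) + ((k : ℂ) + 1) * (π : ℂ) * r - (π : ℂ)) / (N : ℂ)) /
        (Complex.sin ((-(Complex.I * β) + ((k : ℂ) + 1) * (π : ℂ) * r) / (N : ℂ))) ^ 2
  else 1

/-- The structure function `𝒴_{N,r,M}(β)` of Theorem 3.4 of the paper:
`𝒴_{N,r,M}(β) = ∏_{k=1}^{m} sin²((iβ−kπr)/N)/sin²((iβ+kπr)/N) ·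
sin((iβ+kπr+π)/N)/sin((iβ−kπr+π)/N) · sin((iβ+kπr−π)/N)/sin((iβ−kπr−π)/N)`,
with `m = M` for `M > 0` and `m = |M| − 1` for `M < 0`. -/
noncomputable def Yfun (N : ℕ) (r : ℂ) (M : ℤ) (β : ℂ) : ℂ :=
  ∏ k ∈ Finset.range (if 0 < M then M.toNat else M.natAbs - 1),
    ((Complex.sin ((Complex.I * β - ((k : ℂ) + 1) * (π : ℂ) * r) / (N : ℂ))) ^ 2 /
      (Complex.sin ((Complex.I * β + ((k : ℂ) + 1) * (π : ℂ) * r) / (N : ℂ))) ^ 2) *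
    (Complex.sin ((Complex.I * β + ((k : ℂ) + 1) * (π : ℂ) * r + (π : ℂ)) / (N : ℂ)) /
      Complex.sin ((Complex.I * β - ((k : ℂ) + 1) * (π : ℂ) * r + (π : ℂ)) / (N : ℂ))) *
    (Complex.sin ((Complex.I * β + ((k : ℂ) + 1) * (π : ℂ) * r - (π : ℂ)) / (N : ℂ)) /
      Complex.sin ((Complex.I * β - ((k : ℂ) + 1) * (π : ℂ) * r - (π : ℂ)) / (N : ℂ)))

/-- Genericity of `β`: all sines of the form `sin((±iβ + aπr + bπ)/N)`, `a, b ∈ ℤ`,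
occurring in the denominators of the functions `F` and `𝒴`, are nonzero. -/
def Gen (N : ℕ) (r : ℝ) (β : ℂ) : Prop :=
  ∀ a b : ℤ,
    Complex.sin ((Complex.I * β + (a : ℂ) * (π : ℂ) * (r : ℂ) + (b : ℂ) * (π : ℂ)) / (N : ℂ)) ≠ 0

/-- The Corollary of Theorem 3.4 of the paper: when `2r = Nh` with `h` a nonzero integer,
the structure function `𝒴_{N,r,M}` is identically `1` (so the operators `t(β)` generate
an Abelian algebra). -/
theorem Yfun_eq_one (N : ℕ) (hN : 1 ≤ N) (M h : ℤ) (hh : h ≠ 0) (β : ℂ)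
    (hβ : Gen N ((N : ℝ) * h / 2) β) :
    Yfun N (((N : ℝ) * h / 2 : ℝ) : ℂ) M β = 1 := by
  have hN0 : (N : ℂ) ≠ 0 := Nat.cast_ne_zero.mpr (by omega)
  unfold Yfun
  apply Finset.prod_eq_one
  intro k _
  set r : ℂ := (((N : ℝ) * h / 2 : ℝ) : ℂ) with hrdef
  have hr : r = (N : ℂ) * (h : ℂ) / 2 := by rw [hrdef]; push_cast; ring
  set m : ℤ := ((k : ℤ) + 1) * h with hm
  have hAB : ∀ c : ℂ,
      (Complex.I * β + ((k : ℂ) + 1) * (π : ℂ) * r + c) / (N : ℂ)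
        = (Complex.I * β - ((k : ℂ) + 1) * (π : ℂ) * r + c) / (N : ℂ) + (m : ℂ) * (π : ℂ) := by
    intro c
    rw [hr, hm]
    push_cast
    field_simp
    ring
  have key : ∀ c : ℂ,
      Complex.sin ((Complex.I * β + ((k : ℂ) + 1) * (π : ℂ) * r + c) / (N : ℂ))
        = ((m.negOnePow : ℤ) : ℂ) *
          Complex.sin ((Complex.I * β - ((k : ℂ) + 1) * (π : ℂ) * r + c) / (N : ℂ)) := by
    intro c
    rw [hAB c]
    exact Complex.sin_antiperiodic.add_int_mul_eq m
  have hden : ∀ b : ℤ,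
      Complex.sin ((Complex.I * β - ((k : ℂ) + 1) * (π : ℂ) * r + (b : ℂ) * (π : ℂ)) / (N : ℂ)) ≠ 0 := by
    intro b
    have h' := hβ (-((k : ℤ) + 1)) b
    rw [hrdef]
    convert h' using 3
    push_cast
    ring
  set ε : ℂ := ((m.negOnePow : ℤ) : ℂ) with hε
  have hε2 : ε ^ 2 = 1 := by
    rcases Int.units_eq_one_or m.negOnePow with h' | h' <;> rw [hε, h'] <;> norm_num
  have h0 := hden 0
  have h1 := hden 1
  have h2 := hden (-1)
  simp only [Int.cast_zero, Int.cast_one, Int.cast_neg, zero_mul, add_zero, one_mul,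
    neg_mul, ← sub_eq_add_neg] at h0 h1 h2
  have e0 := key 0
  have e1 := key (π : ℂ)
  have e2 := key (-(π : ℂ))
  simp only [add_zero, ← sub_eq_add_neg] at e0 e1 e2
  rw [e0, e1, e2, mul_pow, hε2, one_mul, div_self (pow_ne_zero 2 h0),
    mul_div_assoc, div_self h1, mul_one, one_mul, mul_div_assoc, div_self h2, mul_one, ← sq, hε2]
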